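/- arXiv:math/0410021 — 2 statements merged into one kernel-verified Lean document; each statement's English description precedes it below -/
import Mathlib

section
/- Let x ∈ ℝ^d and let C be an open cone with apex x and angular radius π/6, i.e. C = {y ∈ ℝ^d \ {x} : the angle between y − x and a fixed unit vector u is strictly less than π/6}. Then for all y, z ∈ C one has |z − y| < max(|z − x|, |y − x|). -/
open Real

set_option maxHeartbeats 1000000

theorem stmt1 (d : ℕ) (x u : EuclideanSpace ℝ (Fin d)) (hu : ‖u‖ = 1)
    (C : Set (EuclideanSpace ℝ (Fin d)))
    (hC : C = {y | y ≠ x ∧ InnerProductGeometry.angle (y - x) u < π / 6})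
    (y z : EuclideanSpace ℝ (Fin d)) (hy : y ∈ C) (hz : z ∈ C) :
    ‖z - y‖ < max ‖z - x‖ ‖y - x‖ := by
  subst hC
  obtain ⟨hy0, hyang⟩ := hy
  obtain ⟨hz0, hzang⟩ := hz
  set v := y - x with hv
  set w := z - x with hw
  have hv0 : v ≠ 0 := sub_ne_zero.mpr hy0
  have hw0 : w ≠ 0 := sub_ne_zero.mpr hz0
  have hvpos : (0:ℝ) < ‖v‖ := norm_pos_iff.mpr hv0
  have hwpos : (0:ℝ) < ‖w‖ := norm_pos_iff.mpr hw0
  have hpi : (0:ℝ) < π := Real.pi_pos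
  have hcos : ∀ a : EuclideanSpace ℝ (Fin d), 0 < ‖a‖ →
      InnerProductGeometry.angle a u < π / 6 →
      (Real.sqrt 3 / 2) * ‖a‖ < inner ℝ a u := by
    intro a hapos ha
    have h1 : Real.cos (π / 6) < Real.cos (InnerProductGeometry.angle a u) :=
      Real.strictAntiOn_cos ⟨InnerProductGeometry.angle_nonneg a u,
        InnerProductGeometry.angle_le_pi a u⟩ ⟨by positivity, by linarith⟩ ha
    rw [Real.cos_pi_div_six] at h1
    have h2 := InnerProductGeometry.cos_angle_mul_norm_mul_norm a u
    rw [hu, mul_one] at h2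
    rw [← h2]
    exact mul_lt_mul_of_pos_right h1 hapos
  have hsv : (Real.sqrt 3 / 2) * ‖v‖ < inner ℝ v u := hcos v hvpos hyang
  have hsw : (Real.sqrt 3 / 2) * ‖w‖ < inner ℝ w u := hcos w hwpos hzang
  set sv : ℝ := inner ℝ v u with hsvdef
  set sw : ℝ := inner ℝ w u with hswdef
  set p : EuclideanSpace ℝ (Fin d) := v - sv • u with hpd
  set q : EuclideanSpace ℝ (Fin d) := w - sw • u with hqd
  have hu2 : (inner ℝ u u : ℝ) = 1 := by
    rw [real_inner_self_eq_norm_sq, hu]; norm_num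
  have hsmul : ∀ c : ℝ, ‖c • u‖ ^ 2 = c ^ 2 := by
    intro c
    rw [norm_smul, hu, mul_one, Real.norm_eq_abs, sq_abs]
  have hp2 : ‖p‖ ^ 2 = ‖v‖ ^ 2 - sv ^ 2 := by
    rw [hpd, norm_sub_sq_real, real_inner_smul_right, hsmul, ← hsvdef]
    ring
  have hq2 : ‖q‖ ^ 2 = ‖w‖ ^ 2 - sw ^ 2 := by
    rw [hqd, norm_sub_sq_real, real_inner_smul_right, hsmul, ← hswdef]
    ring
  have hpq : (inner ℝ p q : ℝ) = inner ℝ v w - sv * sw := by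
    rw [hpd, hqd]
    have huw : (inner ℝ u w : ℝ) = sw := by rw [hswdef]; exact (real_inner_comm u w).symm
    simp only [inner_sub_left, inner_sub_right, real_inner_smul_left,
      real_inner_smul_right, hu2, huw, ← hsvdef]
    ring
  have h3 : Real.sqrt 3 ^ 2 = 3 := Real.sq_sqrt (by norm_num)
  have hsvpos : 0 < sv := lt_of_le_of_lt (by positivity) hsv
  have hswpos : 0 < sw := lt_of_le_of_lt (by positivity) hsw
  have hsv2 : (3/4) * ‖v‖ ^ 2 < sv ^ 2 := by
    nlinarith [mul_self_lt_mul_self (by positivity : (0:ℝ) ≤ Real.sqrt 3 / 2 * ‖v‖) hsv]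
  have hsw2 : (3/4) * ‖w‖ ^ 2 < sw ^ 2 := by
    nlinarith [mul_self_lt_mul_self (by positivity : (0:ℝ) ≤ Real.sqrt 3 / 2 * ‖w‖) hsw]
  have hpn : ‖p‖ < ‖v‖ / 2 := by
    have h : ‖p‖ ^ 2 < (‖v‖ / 2) ^ 2 := by nlinarith
    exact lt_of_pow_lt_pow_left₀ 2 (by positivity) h
  have hqn : ‖q‖ < ‖w‖ / 2 := by
    have h : ‖q‖ ^ 2 < (‖w‖ / 2) ^ 2 := by nlinarith
    exact lt_of_pow_lt_pow_left₀ 2 (by positivity) h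
  have hcs : -(‖p‖ * ‖q‖) ≤ inner ℝ p q := neg_le_of_abs_le (abs_real_inner_le_norm p q)
  have hpq' : ‖p‖ * ‖q‖ < (‖v‖ / 2) * (‖w‖ / 2) :=
    mul_lt_mul'' hpn hqn (norm_nonneg p) (norm_nonneg q)
  have hsvsw : (3/4) * (‖v‖ * ‖w‖) < sv * sw := by
    have key : (Real.sqrt 3 / 2 * ‖v‖) * (Real.sqrt 3 / 2 * ‖w‖) = 3/4 * (‖v‖ * ‖w‖) := by
      linear_combination (‖v‖ * ‖w‖ / 4) * h3
    have h := mul_lt_mul'' hsv hsw (by positivity : (0:ℝ) ≤ Real.sqrt 3 / 2 * ‖v‖)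
      (by positivity : (0:ℝ) ≤ Real.sqrt 3 / 2 * ‖w‖)
    linarith
  have hinner : (1/2) * (‖v‖ * ‖w‖) < inner ℝ v w := by linarith
  have hzy : z - y = w - v := by rw [hv, hw]; abel
  have hsq : ‖z - y‖ ^ 2 = ‖w‖ ^ 2 - 2 * inner ℝ v w + ‖v‖ ^ 2 := by
    rw [hzy, norm_sub_sq_real, real_inner_comm w v]
  have hmax : ‖z - y‖ ^ 2 < (max ‖w‖ ‖v‖) ^ 2 := by
    rcases le_total ‖v‖ ‖w‖ with h | h
    · rw [max_eq_left h]
      nlinarith [mul_le_mul_of_nonneg_left h hvpos.le]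
    · rw [max_eq_right h]
      nlinarith [mul_le_mul_of_nonneg_right h hwpos.le]
  exact lt_of_pow_lt_pow_left₀ 2 (le_trans (norm_nonneg w) (le_max_left _ _)) hmax
end

section
/- Let B₀ ⊆ ℝ^d be bounded and convex with positive Lebesgue measure. Then the infimum over all pairs of distinct points x, y ∈ B₀ of vol(C_{x,y} ∩ B_{|y−x|}(x) ∩ B₀)/|y − x|^d is strictly positive, where C_{x,y} is the closed cone with apex x, angular radius π/12, centred on the half-line from x through y. -/
open Real Metric MeasureTheory
open scoped RealInnerProductSpace

lemma angle_le_of_dist_le' {E : Type*} [NormedAddCommGroup E] [InnerProductSpace ℝ E]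
    {θ : ℝ} (hθ0 : 0 < θ) (hθ : θ < π / 2) {a b : E} (hb : b ≠ 0)
    (h : ‖a - b‖ ≤ ‖b‖ * Real.sin θ) : InnerProductGeometry.angle a b ≤ θ := by
  have hπ : 0 < π := Real.pi_pos
  have hsθ : 0 < Real.sin θ := Real.sin_pos_of_pos_of_lt_pi hθ0 (by linarith)
  have hcθ : 0 < Real.cos θ := Real.cos_pos_of_mem_Ioo ⟨by linarith, hθ⟩
  have hsc : Real.sin θ ^ 2 + Real.cos θ ^ 2 = 1 := Real.sin_sq_add_cos_sq θ
  have hsθ1 : Real.sin θ < 1 := by nlinarith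
  have hB : 0 < ‖b‖ := norm_pos_iff.2 hb
  have hE0 : 0 ≤ ‖a - b‖ := norm_nonneg _
  have hip : ⟪a - b, b⟫ = ⟪a, b⟫ - ‖b‖ ^ 2 := by
    rw [inner_sub_left, real_inner_self_eq_norm_sq]
  have hcs : |⟪a - b, b⟫| ≤ ‖a - b‖ * ‖b‖ := abs_real_inner_le_norm _ _
  have hcs1 : ⟪a - b, b⟫ ≤ ‖a - b‖ * ‖b‖ := (abs_le.1 hcs).2
  have hcs2 : -(‖a - b‖ * ‖b‖) ≤ ⟪a - b, b⟫ := (abs_le.1 hcs).1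
  have hna : ‖a‖ ^ 2 = ‖a - b‖ ^ 2 + 2 * ⟪a - b, b⟫ + ‖b‖ ^ 2 := by
    have h1 : a = (a - b) + b := by abel
    calc ‖a‖ ^ 2 = ‖(a - b) + b‖ ^ 2 := by rw [← h1]
      _ = _ := norm_add_sq_real _ _
  have hipa : 0 < ⟪a, b⟫ := by
    nlinarith [mul_le_mul_of_nonneg_right h hB.le,
      mul_pos (mul_pos hB hB) (by linarith : (0:ℝ) < 1 - Real.sin θ)]
  have ha0 : 0 < ‖a‖ := by
    rcases eq_or_ne a 0 with h' | h'
    · rw [h', inner_zero_left] at hipa; linarith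
    · exact norm_pos_iff.2 h'
  have hc2 : Real.cos θ ^ 2 = 1 - Real.sin θ ^ 2 := by linarith
  have hE2 : ‖a - b‖ ^ 2 ≤ ‖b‖ ^ 2 * Real.sin θ ^ 2 := by
    nlinarith [mul_le_mul_of_nonneg_right h hB.le]
  have hsq : (Real.cos θ * (‖a‖ * ‖b‖)) ^ 2 ≤ ⟪a, b⟫ ^ 2 := by
    have h1 : (Real.cos θ * (‖a‖ * ‖b‖)) ^ 2 =
        (1 - Real.sin θ ^ 2) * ((‖a - b‖ ^ 2 + 2 * ⟪a - b, b⟫ + ‖b‖ ^ 2) * ‖b‖ ^ 2) := by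
      rw [mul_pow, mul_pow, hna, hc2]
    have h2 : ⟪a, b⟫ = ⟪a - b, b⟫ + ‖b‖ ^ 2 := by linarith
    rw [h1, h2]
    nlinarith [sq_nonneg (⟪a - b, b⟫ + ‖b‖ ^ 2 * Real.sin θ ^ 2),
      mul_le_mul_of_nonneg_left hE2
        (mul_nonneg (by nlinarith : (0:ℝ) ≤ 1 - Real.sin θ ^ 2) (sq_nonneg ‖b‖))]
  have hkey : Real.cos θ * (‖a‖ * ‖b‖) ≤ ⟪a, b⟫ := by
    nlinarith [hsq, hipa, mul_nonneg (mul_nonneg hcθ.le ha0.le) hB.le]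
  have hcos : Real.cos θ ≤ Real.cos (InnerProductGeometry.angle a b) := by
    rw [InnerProductGeometry.cos_angle]
    rw [le_div_iff₀ (mul_pos ha0 hB)]
    linarith
  have hmem1 : θ ∈ Set.Icc 0 π := ⟨hθ0.le, by linarith⟩
  have hmem2 : InnerProductGeometry.angle a b ∈ Set.Icc 0 π :=
    ⟨InnerProductGeometry.angle_nonneg a b, InnerProductGeometry.angle_le_pi a b⟩
  exact (Real.strictAntiOn_cos.le_iff_ge hmem1 hmem2).1 hcos


set_option maxHeartbeats 1000000 in
theorem stmt3 (d : ℕ) (hd : 1 ≤ d) (B₀ : Set (EuclideanSpace ℝ (Fin d)))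
    (hB : Bornology.IsBounded B₀) (hconv : Convex ℝ B₀)
    (hpos : 0 < volume B₀) :
    0 < ⨅ p : {p : EuclideanSpace ℝ (Fin d) × EuclideanSpace ℝ (Fin d) //
        p.1 ∈ B₀ ∧ p.2 ∈ B₀ ∧ p.1 ≠ p.2},
      (volume (({p.val.1} ∪
          {w | InnerProductGeometry.angle (w - p.val.1) (p.val.2 - p.val.1) ≤ π / 12})
          ∩ closedBall p.val.1 ‖p.val.2 - p.val.1‖ ∩ B₀)).toReal /
        ‖p.val.2 - p.val.1‖ ^ d := by
  classical
  have hint : (interior B₀).Nonempty := by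
    by_contra hcon
    rw [Set.not_nonempty_iff_eq_empty] at hcon
    have hspan : affineSpan ℝ B₀ ≠ ⊤ := by
      intro htop
      rw [← hconv.interior_nonempty_iff_affineSpan_eq_top] at htop
      rw [hcon] at htop
      exact htop.ne_empty rfl
    have h0 : volume B₀ = 0 :=
      measure_mono_null (subset_affineSpan ℝ B₀)
        (MeasureTheory.Measure.addHaar_affineSubspace volume _ hspan)
    rw [h0] at hpos; exact lt_irrefl _ hpos
  obtain ⟨z, hz⟩ := hint
  obtain ⟨ρ, hρ, hball⟩ := Metric.isOpen_iff.1 isOpen_interior z hz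
  replace hball : ball z ρ ⊆ B₀ := hball.trans interior_subset
  have hzB : z ∈ B₀ := hball (mem_ball_self hρ)
  obtain ⟨R, hBR⟩ := hB.subset_closedBall z
  have hR0 : 0 ≤ R := by simpa using hBR hzB
  have hρR : 0 < ρ + R := by linarith
  -- basic facts about the angle π/12
  have hπ : 0 < π := Real.pi_pos
  have hθ0 : 0 < π / 12 := by linarith
  have hθlt : π / 12 < π / 2 := by linarith
  set sθ : ℝ := Real.sin (π / 12) with hsθ_def
  have hsθ : 0 < sθ := Real.sin_pos_of_pos_of_lt_pi hθ0 (by linarith)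
  have hsθ1 : sθ ≤ 1 := Real.sin_le_one _
  -- the volume of the unit ball
  set V : ENNReal := volume (ball (0 : EuclideanSpace ℝ (Fin d)) 1) with hV_def
  have hVpos : 0 < V := measure_ball_pos _ _ one_pos
  have hVlt : V < ⊤ := measure_ball_lt_top
  have hVt : 0 < V.toReal := ENNReal.toReal_pos hVpos.ne' hVlt.ne
  -- the uniform constant
  set c : ℝ := (ρ * sθ / (2 * (ρ + R))) ^ d * V.toReal with hc_def
  have hc : 0 < c := by positivity
  -- the index type is nonempty
  haveI : Nonempty {p : EuclideanSpace ℝ (Fin d) × EuclideanSpace ℝ (Fin d) //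
      p.1 ∈ B₀ ∧ p.2 ∈ B₀ ∧ p.1 ≠ p.2} := by
    have hsv : ‖(ρ / 2) • EuclideanSpace.single (⟨0, hd⟩ : Fin d) (1:ℝ)‖ = ρ / 2 := by
      rw [norm_smul, EuclideanSpace.norm_single, norm_one, mul_one, Real.norm_eq_abs,
        abs_of_pos (by linarith)]
    refine ⟨⟨(z, z + (ρ / 2) • EuclideanSpace.single (⟨0, hd⟩ : Fin d) 1), hzB, ?_, ?_⟩⟩
    · apply hball
      rw [mem_ball, dist_eq_norm, add_sub_cancel_left, hsv]
      linarith
    · intro hne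
      dsimp only at hne
      have h0 := left_eq_add.mp hne
      rw [h0, norm_zero] at hsv
      linarith
  refine lt_of_lt_of_le hc (le_ciInf ?_)
  rintro ⟨⟨x, y⟩, hx, hy, hxy⟩
  dsimp only
  set r : ℝ := ‖y - x‖ with hr_def
  have hr : 0 < r := norm_pos_iff.2 (sub_ne_zero.2 (Ne.symm hxy))
  have hr2R : r ≤ 2 * R := by
    have h1 : dist y z ≤ R := by simpa using hBR hy
    have h2 : dist z x ≤ R := by
      have := hBR hx; rw [mem_closedBall, dist_comm] at this; exact this
    calc r = dist y x := (dist_eq_norm y x).symm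
      _ ≤ dist y z + dist z x := dist_triangle _ _ _
      _ ≤ 2 * R := by linarith
  set t : ℝ := r * sθ / (2 * (ρ + R)) with ht_def
  have ht0 : 0 < t := by positivity
  have ht1 : t ≤ 1 := by
    rw [ht_def, div_le_one (by linarith)]
    nlinarith
  set m : EuclideanSpace ℝ (Fin d) := x + (2⁻¹ : ℝ) • (y - x) with hm_def
  have hmB : m ∈ B₀ := hconv.add_smul_sub_mem hx hy ⟨by norm_num, by norm_num⟩
  have hmx : ‖m - x‖ = r / 2 := by
    have : m - x = (2⁻¹ : ℝ) • (y - x) := by rw [hm_def]; abel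
    rw [this, norm_smul]; simp [hr_def]; ring
  have hzm : ‖z - m‖ ≤ R := by
    have := hBR hmB
    rw [mem_closedBall, dist_comm, dist_eq_norm] at this
    exact this
  set p : EuclideanSpace ℝ (Fin d) := m + t • (z - m) with hp_def
  have htρR : t * (ρ + R) = r * sθ / 2 := by
    rw [ht_def]; field_simp
  -- the small ball is contained in the target set
  have hsub : ball p (t * ρ) ⊆
      (({x} ∪ {w | InnerProductGeometry.angle (w - x) (y - x) ≤ π / 12})
        ∩ closedBall x ‖y - x‖ ∩ B₀) := by
    intro w hw
    rw [mem_ball, dist_eq_norm] at hw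
    have hwm : ‖w - m‖ ≤ r * sθ / 2 := by
      have h1 : ‖p - m‖ ≤ t * R := by
        have : p - m = t • (z - m) := by rw [hp_def]; abel
        rw [this, norm_smul, Real.norm_eq_abs, abs_of_pos ht0]
        exact mul_le_mul_of_nonneg_left hzm ht0.le
      calc ‖w - m‖ = ‖(w - p) + (p - m)‖ := by congr 1; abel
        _ ≤ ‖w - p‖ + ‖p - m‖ := norm_add_le _ _
        _ ≤ t * ρ + t * R := by linarith [hw.le]
        _ = t * (ρ + R) := by ring
        _ = r * sθ / 2 := htρR
    refine ⟨⟨Or.inr ?_, ?_⟩, ?_⟩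
    · -- angle condition
      have hb : ((2⁻¹ : ℝ) • (y - x) : EuclideanSpace ℝ (Fin d)) ≠ 0 :=
        smul_ne_zero (by norm_num) (sub_ne_zero.2 (Ne.symm hxy))
      have hdist : ‖(w - x) - (2⁻¹ : ℝ) • (y - x)‖ ≤ ‖(2⁻¹ : ℝ) • (y - x)‖ * sθ := by
        have he : (w - x) - (2⁻¹ : ℝ) • (y - x) = w - m := by rw [hm_def]; abel
        have hn : ‖(2⁻¹ : ℝ) • (y - x)‖ = r / 2 := by
          rw [norm_smul]; simp [hr_def]; ring
        rw [he, hn]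
        calc ‖w - m‖ ≤ r * sθ / 2 := hwm
          _ = r / 2 * sθ := by ring
      have := angle_le_of_dist_le' hθ0 hθlt hb hdist
      rwa [InnerProductGeometry.angle_smul_right_of_pos (w - x) (y - x)
        (by norm_num : (0:ℝ) < 2⁻¹)] at this
    · -- closed ball condition
      rw [mem_closedBall, dist_eq_norm]
      calc ‖w - x‖ = ‖(w - m) + (m - x)‖ := by congr 1; abel
        _ ≤ ‖w - m‖ + ‖m - x‖ := norm_add_le _ _
        _ ≤ r * sθ / 2 + r / 2 := by rw [hmx] at *; linarith
        _ ≤ r := by nlinarith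
    · -- membership in B₀
      set q : EuclideanSpace ℝ (Fin d) := z + t⁻¹ • (w - p) with hq_def
      have hq : q ∈ ball z ρ := by
        rw [mem_ball, dist_eq_norm]
        have : q - z = t⁻¹ • (w - p) := by rw [hq_def]; abel
        rw [this, norm_smul, Real.norm_eq_abs, abs_of_pos (by positivity : (0:ℝ) < t⁻¹)]
        calc t⁻¹ * ‖w - p‖ < t⁻¹ * (t * ρ) := by
              apply mul_lt_mul_of_pos_left hw (by positivity)
          _ = ρ := by field_simp
      have hwq : w = m + t • (q - m) := by
        rw [hq_def, hp_def]
        match_scalars <;> (field_simp; try ring)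
      rw [hwq]
      exact hconv.add_smul_sub_mem hmB (hball hq) ⟨ht0.le, ht1⟩
  -- volume computation
  set S := (({x} ∪ {w | InnerProductGeometry.angle (w - x) (y - x) ≤ π / 12})
        ∩ closedBall x ‖y - x‖ ∩ B₀) with hS_def
  have hSfin : volume S ≠ ⊤ := by
    have : volume S ≤ volume (closedBall z R) := by
      apply measure_mono
      intro w hw
      exact hBR hw.2
    exact (lt_of_le_of_lt this measure_closedBall_lt_top).ne
  have hvol : ENNReal.ofReal ((t * ρ) ^ d) * V ≤ volume S := by
    have h1 : volume (ball p (t * ρ)) = ENNReal.ofReal ((t * ρ) ^ d) * V := by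
      rw [hV_def, MeasureTheory.Measure.addHaar_ball_of_pos volume p
        (by positivity : (0:ℝ) < t * ρ), finrank_euclideanSpace_fin]
    rw [← h1]
    exact measure_mono hsub
  have hvolR : (t * ρ) ^ d * V.toReal ≤ (volume S).toReal := by
    have h2 := ENNReal.toReal_mono hSfin hvol
    rwa [ENNReal.toReal_mul, ENNReal.toReal_ofReal (by positivity)] at h2
  rw [hc_def, le_div_iff₀ (by positivity : (0:ℝ) < ‖y - x‖ ^ d)]
  have hkey : (ρ * sθ / (2 * (ρ + R))) ^ d * V.toReal * ‖y - x‖ ^ d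
      = (t * ρ) ^ d * V.toReal := by
    rw [← hr_def, ht_def]
    rw [show r * sθ / (2 * (ρ + R)) * ρ = ρ * sθ / (2 * (ρ + R)) * r by ring, mul_pow]
    ring
  rw [hkey]
  exact hvolR
end
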